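/- For every real number x with 0 < x < 1/4, setting C(x) = (1 − √(1 − 4x))/(2x) (the generating function of the Catalan numbers evaluated at x), the sequence k ↦ F_k(x)/F_{k+1}(x) converges to C(x) as k → ∞. -/
import Mathlib


/-- The two-variable Fibonacci polynomials: `F_0 = F_1 = 1`, `F_2 = 1 - z`,
`F_k = F_{k-1} - x F_{k-2}` for `k ≥ 3`. -/
noncomputable def fibPoly (x z : ℝ) : ℕ → ℝ
  | 0 => 1
  | 1 => 1
  | 2 => 1 - z
  | (k + 3) => fibPoly x z (k + 2) - x * fibPoly x z (k + 1)

lemma fibPoly_rec (x : ℝ) (k : ℕ) :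
    fibPoly x x (k + 2) = fibPoly x x (k + 1) - x * fibPoly x x k := by
  match k with
  | 0 => simp [fibPoly]
  | (n + 1) => rfl

/-- For `0 < x < 1/4`, with `C(x) = (1 − √(1 − 4x))/(2x)`,
the sequence `F_k(x)/F_{k+1}(x)` converges to `C(x)` as `k → ∞`. -/
theorem stmt_8 (x : ℝ) (hx0 : 0 < x) (hx1 : x < 1 / 4) :
    Filter.Tendsto (fun k : ℕ => fibPoly x x k / fibPoly x x (k + 1))
      Filter.atTop (nhds ((1 - Real.sqrt (1 - 4 * x)) / (2 * x))) := by
  obtain ⟨s, hs⟩ : ∃ s, s = Real.sqrt (1 - 4 * x) := ⟨_, rfl⟩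
  have h4x : (0:ℝ) < 1 - 4 * x := by linarith
  have hs2 : s ^ 2 = 1 - 4 * x := by rw [hs]; exact Real.sq_sqrt (le_of_lt h4x)
  have hs0 : 0 < s := by rw [hs]; exact Real.sqrt_pos.mpr h4x
  have hs1 : s < 1 := by nlinarith [hs2]
  obtain ⟨a, ha⟩ : ∃ a : ℝ, a = (1 + s) / 2 := ⟨_, rfl⟩
  obtain ⟨b, hb⟩ : ∃ b : ℝ, b = (1 - s) / 2 := ⟨_, rfl⟩
  have ha0 : 0 < a := by rw [ha]; linarith
  have hb0 : 0 < b := by rw [hb]; linarith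
  have hba : b < a := by rw [ha, hb]; linarith
  have ha2 : a ^ 2 = a - x := by rw [ha]; nlinarith [hs2]
  have hb2 : b ^ 2 = b - x := by rw [hb]; nlinarith [hs2]
  have hab : a - b = s := by rw [ha, hb]; ring
  -- closed form
  have hcf : ∀ k, fibPoly x x k = (a ^ (k + 1) - b ^ (k + 1)) / s := by
    intro k
    induction k using Nat.twoStepInduction with
    | zero =>
      show (1:ℝ) = (a ^ 1 - b ^ 1) / s
      rw [pow_one, pow_one, hab, div_self hs0.ne']
    | one =>
      show (1:ℝ) = (a ^ 2 - b ^ 2) / s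
      have hab1 : a + b = 1 := by rw [ha, hb]; ring
      rw [sq_sub_sq, hab, hab1, one_mul, div_self hs0.ne']
    | more n ih1 ih2 =>
      rw [fibPoly_rec, ih1, ih2]
      have h1 : a ^ (n + 2 + 1) = a ^ (n + 1) * (a - x) := by rw [← ha2]; ring
      have h2 : b ^ (n + 2 + 1) = b ^ (n + 1) * (b - x) := by rw [← hb2]; ring
      rw [h1, h2]
      field_simp
      ring
  obtain ⟨q, hq⟩ : ∃ q : ℝ, q = b / a := ⟨_, rfl⟩
  have hq0 : 0 ≤ q := by rw [hq]; exact le_of_lt (div_pos hb0 ha0)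
  have hq1 : q < 1 := by rw [hq]; exact (div_lt_one ha0).mpr hba
  have hqk : Filter.Tendsto (fun k : ℕ => q ^ k) Filter.atTop (nhds 0) :=
    tendsto_pow_atTop_nhds_zero_of_lt_one hq0 hq1
  -- rewrite the ratio
  have hrat : ∀ k : ℕ, fibPoly x x k / fibPoly x x (k + 1)
      = (1 - q ^ (k + 1)) / (a * (1 - q ^ (k + 2))) := by
    intro k
    rw [hcf k, hcf (k + 1)]
    have hbp : ∀ m : ℕ, 0 < m → b ^ m < a ^ m := fun m hm =>
      pow_lt_pow_left₀ hba (le_of_lt hb0) (by omega)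
    have hd1 : a ^ (k + 2) - b ^ (k + 2) ≠ 0 := by
      have := hbp (k + 2) (by omega)
      exact sub_ne_zero.mpr this.ne'
    have hq' : q ^ (k+1) = b ^ (k+1) / a ^ (k+1) := by rw [hq, div_pow]
    have hq'' : q ^ (k+2) = b ^ (k+2) / a ^ (k+2) := by rw [hq, div_pow]
    rw [hq', hq'']
    have hcan : (a^(k+1) - b^(k+1)) / s / ((a^(k+1+1) - b^(k+1+1)) / s)
        = (a^(k+1) - b^(k+1)) / (a^(k+2) - b^(k+2)) := by
      rw [show k+1+1 = k+2 from rfl, div_div_div_eq]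
      rw [mul_comm s (a^(k+2) - b^(k+2)), mul_div_mul_right _ _ hs0.ne']
    rw [hcan]
    rw [div_eq_div_iff hd1 ?_]
    · field_simp
      ring
    · have hak : (0:ℝ) < a ^ (k+1) := pow_pos ha0 _
      have hak2 : (0:ℝ) < a ^ (k+2) := pow_pos ha0 _
      have : 1 - b ^ (k+2) / a ^ (k+2) > 0 := by
        rw [gt_iff_lt, sub_pos, div_lt_one hak2]; exact hbp (k+2) (by omega)
      positivity
  have hlim : Filter.Tendsto (fun k : ℕ => (1 - q ^ (k + 1)) / (a * (1 - q ^ (k + 2))))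
      Filter.atTop (nhds ((1 - 0) / (a * (1 - 0)))) := by
    apply Filter.Tendsto.div
    · exact (tendsto_const_nhds.sub (hqk.comp (Filter.tendsto_add_atTop_nat 1)))
    · exact tendsto_const_nhds.mul
        (tendsto_const_nhds.sub (hqk.comp (Filter.tendsto_add_atTop_nat 2)))
    · simp; positivity
  have hval : (1 - (0:ℝ)) / (a * (1 - 0)) = (1 - s) / (2 * x) := by
    rw [ha, hs]
    rw [div_eq_div_iff (by rw [← hs]; positivity) (by positivity)]
    rw [← hs]
    nlinarith [hs2]
  rw [← hs, ← hval]
  simpa [hrat] using hlim
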